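/- Let l = p, A ∈ ℝ^{n×n}, H ∈ ℝ^{n×p} with rank(H) = p, C ∈ ℝ^{p×n}, and L ∈ ℝ^{n×p} satisfy L·C·A^r·H = H and L·C·A^d·H = 0 for 0 ≤ d < r. Then C·A^d·H = 0 for all 0 ≤ d ≤ r-1 and rank(L) = p. -/

import Mathlib

theorem stmt_4 (n p r : ℕ)
    (A : Matrix (Fin n) (Fin n) ℝ) (H : Matrix (Fin n) (Fin p) ℝ)
    (C : Matrix (Fin p) (Fin n) ℝ) (L : Matrix (Fin n) (Fin p) ℝ)
    (hH : H.rank = p)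
    (hL : L * C * A ^ r * H = H)
    (hLd : ∀ d < r, L * C * A ^ d * H = 0) :
    (∀ d < r, C * A ^ d * H = 0) ∧ L.rank = p := by
  have hrankL : L.rank = p := by
    refine le_antisymm (Matrix.rank_le_width L) ?_
    calc p = H.rank := hH.symm
    _ = (L * (C * A ^ r * H)).rank := by rw [show L * (C * A ^ r * H) = L * C * A ^ r * H by rw [← Matrix.mul_assoc, ← Matrix.mul_assoc], hL]
    _ ≤ L.rank := Matrix.rank_mul_le_left L _
  -- full column rank ⇒ injective mulVecLin
  have hker : LinearMap.ker L.mulVecLin = ⊥ := by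
    have h1 := L.mulVecLin.finrank_range_add_finrank_ker
    rw [Module.finrank_pi, Fintype.card_fin] at h1
    have h2 : Module.finrank ℝ (LinearMap.range L.mulVecLin) = p := hrankL
    have : Module.finrank ℝ (LinearMap.ker L.mulVecLin) = 0 := by omega
    exact Submodule.finrank_eq_zero.mp this
  have hinj : Function.Injective L.mulVecLin := by
    rwa [← LinearMap.ker_eq_bot]
  refine ⟨fun d hd => ?_, hrankL⟩
  have h := hLd d hd
  ext i j
  have : L.mulVec (fun k => (C * A ^ d * H) k j) = L.mulVec 0 := by
    rw [Matrix.mulVec_zero]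
    have h2 : L * (C * A ^ d * H) = 0 := by rw [← Matrix.mul_assoc, ← Matrix.mul_assoc]; exact h
    have := fun i' => congrFun (congrFun h2 i')
    funext i'
    simpa [Matrix.mul_apply, Matrix.mulVec, dotProduct] using this i' j
  have := hinj this
  have := congrFun this i
  simpa using this
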